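/- arXiv:1006.2942 — 3 statements merged into one kernel-verified Lean document; each statement's English description precedes it below -/
import Mathlib

section
/- Let Ω ⊆ ℝ³ be measurable, Φ : Ω → ℝ measurable with Φ ≥ 0 and e^{-Φ} ∈ L¹(Ω). Suppose η ≥ 0 is integrable with ∫_Ω η log η dx + ∫_Ω Φ η dx ≤ C. Then for every ε > 0 there exists R > 0, depending only on C, ε and Φ, such that ∫_{Ω ∩ {|x| > R}} η(x) dx < ε. -/
open MeasureTheory Real

lemma aux_mul_log (s : ℝ) (hs : 0 ≤ s) : -(Real.exp 1)⁻¹ ≤ s * Real.log s := by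
  rcases eq_or_lt_of_le hs with h | h
  · simp [← h]; positivity
  · have h1 := Real.add_one_le_exp (-(Real.log s) - 1)
    have key : Real.exp (-(Real.log s) - 1) * (s * Real.exp 1) = 1 := by
      rw [← Real.exp_log h, ← Real.exp_add, ← Real.exp_add]; simp
    have he : (0:ℝ) < Real.exp 1 := Real.exp_pos 1
    have hei : Real.exp 1 * (Real.exp 1)⁻¹ = 1 := mul_inv_cancel₀ (ne_of_gt he)
    set E := Real.exp (-(Real.log s) - 1) with hE
    have hE0 : 0 < E := Real.exp_pos _
    have h2 : s * (-(Real.log s)) ≤ s * E := by nlinarith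
    have h3 : s * E = (Real.exp 1)⁻¹ := by
      have : s * E * (Real.exp 1 * (Real.exp 1)⁻¹) = (E * (s * Real.exp 1)) * (Real.exp 1)⁻¹ := by ring
      rw [hei, key] at this; linarith
    nlinarith

lemma aux_mul_log2 (a b : ℝ) (ha : 0 ≤ a) :
    -(Real.exp (-b) / Real.exp 1) ≤ a * Real.log a + b * a := by
  rcases eq_or_lt_of_le ha with h | h
  · simp [← h]; positivity
  · have key := aux_mul_log (a * Real.exp b) (by positivity)
    have hl : Real.log (a * Real.exp b) = Real.log a + b := by
      rw [Real.log_mul (ne_of_gt h) (Real.exp_ne_zero b), Real.log_exp]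
    rw [hl] at key
    have h3 : Real.exp (-b) * Real.exp b = 1 := by rw [← Real.exp_add]; simp
    have h4 : (0:ℝ) < Real.exp (-b) := Real.exp_pos _
    have h5 : (0:ℝ) < Real.exp 1 := Real.exp_pos _
    have h6 := mul_le_mul_of_nonneg_left key h4.le
    have h7 : Real.exp (-b) * (a * Real.exp b * (Real.log a + b)) = a * Real.log a + b * a := by
      have : Real.exp (-b) * (a * Real.exp b * (Real.log a + b))
          = (Real.exp (-b) * Real.exp b) * (a * (Real.log a + b)) := by ring
      rw [this, h3]; ring
    rw [h7] at h6
    have h8 : Real.exp (-b) * -(Real.exp 1)⁻¹ = -(Real.exp (-b) / Real.exp 1) := by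
      rw [div_eq_mul_inv]; ring
    rw [h8] at h6; exact h6

lemma aux_key (a b L : ℝ) (ha : 0 ≤ a) (hb : 0 ≤ b) (hL : 0 < L) :
    a ≤ Real.exp L * Real.exp (-b) + (a * Real.log a + b * a + Real.exp (-b) / Real.exp 1) / L := by
  rcases le_or_gt a (Real.exp L * Real.exp (-b)) with h | h
  · have h1 := aux_mul_log2 a b ha
    have : 0 ≤ (a * Real.log a + b * a + Real.exp (-b) / Real.exp 1) / L := by
      apply div_nonneg _ hL.le; linarith
    linarith
  · have ha' : 0 < a := lt_of_le_of_lt (by positivity) h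
    have h2 : Real.exp (L - b) ≤ a := by
      rw [Real.exp_sub, div_eq_mul_inv, ← Real.exp_neg]
      exact h.le
    have h3 : L - b ≤ Real.log a := (Real.le_log_iff_exp_le ha').mpr h2
    have h4 : a * L ≤ a * Real.log a + b * a := by nlinarith
    have h5 : a ≤ (a * Real.log a + b * a) / L := by rw [le_div_iff₀ hL]; linarith
    have h6 : 0 ≤ Real.exp (-b) / Real.exp 1 := by positivity
    have h7 : 0 ≤ Real.exp L * Real.exp (-b) := by positivity
    have h8 : (a * Real.log a + b * a) / L ≤ (a * Real.log a + b * a + Real.exp (-b) / Real.exp 1) / L := by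
      apply (div_le_div_iff_of_pos_right hL).mpr
      linarith
    linarith


lemma aux_tail (Ω : Set (EuclideanSpace ℝ (Fin 3))) (hΩ : MeasurableSet Ω)
    (f : EuclideanSpace ℝ (Fin 3) → ℝ) (hf : IntegrableOn f Ω) :
    Filter.Tendsto (fun n : ℕ => ∫ x in Ω ∩ {x | (n:ℝ) < ‖x‖}, f x) Filter.atTop (nhds 0) := by
  have hsm : ∀ n : ℕ, MeasurableSet (Ω ∩ {x : EuclideanSpace ℝ (Fin 3) | (n:ℝ) < ‖x‖}) := by
    intro n
    exact hΩ.inter (measurableSet_lt measurable_const measurable_norm)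
  have hanti : Antitone (fun n : ℕ => Ω ∩ {x : EuclideanSpace ℝ (Fin 3) | (n:ℝ) < ‖x‖}) := by
    intro n m hnm x hx
    refine ⟨hx.1, ?_⟩
    have h2 : (n:ℝ) ≤ (m:ℝ) := by exact_mod_cast hnm
    exact lt_of_le_of_lt h2 hx.2
  have hint : (⋂ n : ℕ, Ω ∩ {x : EuclideanSpace ℝ (Fin 3) | (n:ℝ) < ‖x‖}) = ∅ := by
    ext x
    simp only [Set.mem_iInter, Set.mem_inter_iff, Set.mem_setOf_eq, Set.mem_empty_iff_false,
      iff_false, not_forall]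
    obtain ⟨n, hn⟩ := exists_nat_gt ‖x‖
    exact ⟨n, fun h => absurd h.2 (not_lt.mpr hn.le)⟩
  have := tendsto_setIntegral_of_antitone hsm hanti ⟨0, by
    simpa using hf.mono_set (Set.inter_subset_left)⟩ (f := f) (μ := volume)
  rwa [hint, setIntegral_empty] at this

theorem stmt_3 (Ω : Set (EuclideanSpace ℝ (Fin 3))) (hΩ : MeasurableSet Ω)
    (Φ : EuclideanSpace ℝ (Fin 3) → ℝ) (hΦm : Measurable Φ) (hΦ0 : ∀ x ∈ Ω, 0 ≤ Φ x)
    (hexp : IntegrableOn (fun x => Real.exp (-Φ x)) Ω) (C : ℝ) :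
    ∀ ε > 0, ∃ R > 0, ∀ η : EuclideanSpace ℝ (Fin 3) → ℝ,
      Measurable η → (∀ x ∈ Ω, 0 ≤ η x) → IntegrableOn η Ω →
      IntegrableOn (fun x => η x * Real.log (η x)) Ω →
      IntegrableOn (fun x => Φ x * η x) Ω →
      (∫ x in Ω, η x * Real.log (η x)) + (∫ x in Ω, Φ x * η x) ≤ C →
      ∫ x in Ω ∩ {x | R < ‖x‖}, η x < ε := by
  intro ε hε
  set f : EuclideanSpace ℝ (Fin 3) → ℝ := fun x => Real.exp (-Φ x) with hf_def
  set I : ℝ := ∫ x in Ω, f x with hI_def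
  have hI0 : 0 ≤ I := setIntegral_nonneg hΩ fun x _ => (Real.exp_pos _).le
  set K : ℝ := |C| + I + 1 with hK_def
  have hK0 : 0 < K := by positivity
  set L : ℝ := 2 * K / ε with hL_def
  have hL0 : 0 < L := by positivity
  have hδ0 : 0 < ε / 2 / Real.exp L := by positivity
  have htail := aux_tail Ω hΩ f hexp
  have hev := Filter.Tendsto.eventually_lt_const hδ0 htail
  obtain ⟨n, hn⟩ := hev.exists
  refine ⟨(n:ℝ) + 1, by positivity, ?_⟩
  intro η hηm hη0 hηint hηlog hΦη hC
  set A : Set (EuclideanSpace ℝ (Fin 3)) := Ω ∩ {x | (n:ℝ) + 1 < ‖x‖} with hA_def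
  have hAΩ : A ⊆ Ω := Set.inter_subset_left
  have hA : MeasurableSet A := hΩ.inter (measurableSet_lt measurable_const measurable_norm)
  -- integrable pieces
  set g : EuclideanSpace ℝ (Fin 3) → ℝ := fun x => η x * Real.log (η x) + Φ x * η x with hg_def
  have hg_int : IntegrableOn g Ω := hηlog.add hΦη
  have hgf_int : IntegrableOn (fun x => g x + f x / Real.exp 1) Ω :=
    hg_int.add (hexp.div_const _)
  set F : EuclideanSpace ℝ (Fin 3) → ℝ :=
    fun x => Real.exp L * f x + (g x + f x / Real.exp 1) / L with hF_def
  have hF_int : IntegrableOn F Ω := (hexp.const_mul _).add (hgf_int.div_const _)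
  -- step 1: pointwise bound
  have step1 : ∫ x in A, η x ≤ ∫ x in A, F x := by
    refine setIntegral_mono_on (hηint.mono_set hAΩ) (hF_int.mono_set hAΩ) hA ?_
    intro x hx
    exact aux_key (η x) (Φ x) L (hη0 x (hAΩ hx)) (hΦ0 x (hAΩ hx)) hL0
  -- step 2: split the integral
  have step2 : ∫ x in A, F x
      = Real.exp L * (∫ x in A, f x) + (∫ x in A, (g x + f x / Real.exp 1)) / L := by
    rw [hF_def]
    rw [integral_add ((hexp.mono_set hAΩ).const_mul _) ((hgf_int.mono_set hAΩ).div_const _),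
      integral_const_mul, integral_div]
  -- step 3: monotone in set for the nonneg part
  have hnonneg : ∀ x ∈ Ω, 0 ≤ g x + f x / Real.exp 1 := by
    intro x hx
    have := aux_mul_log2 (η x) (Φ x) (hη0 x hx)
    simp only [hg_def, hf_def]
    linarith
  have step3 : (∫ x in A, (g x + f x / Real.exp 1)) ≤ ∫ x in Ω, (g x + f x / Real.exp 1) := by
    refine setIntegral_mono_set hgf_int ?_ (HasSubset.Subset.eventuallyLE hAΩ)
    exact (ae_restrict_mem hΩ).mono hnonneg
  -- step 4: bound the Ω-integral by K
  have step4 : (∫ x in Ω, (g x + f x / Real.exp 1)) ≤ K := by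
    rw [integral_add hg_int (hexp.div_const _), integral_div]
    have hg_val : (∫ x in Ω, g x) ≤ C := by
      rw [hg_def, integral_add hηlog hΦη]; exact hC
    have hIe : I / Real.exp 1 ≤ I := by
      have h1 : (1:ℝ) ≤ Real.exp 1 := by
        have := Real.add_one_le_exp (1:ℝ); linarith
      calc I / Real.exp 1 ≤ I / 1 := by
            apply div_le_div_of_nonneg_left hI0 one_pos h1
        _ = I := div_one I
    have : (∫ x in Ω, f x) = I := rfl
    rw [this]
    have hCabs : C ≤ |C| := le_abs_self C
    linarith
  -- step 5: tail bound for f on A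
  have step5 : (∫ x in A, f x) < ε / 2 / Real.exp L := by
    have hsub : A ⊆ Ω ∩ {x : EuclideanSpace ℝ (Fin 3) | (n:ℝ) < ‖x‖} := by
      intro x hx
      exact ⟨hx.1, by have := hx.2; simp only [Set.mem_setOf_eq] at this ⊢; linarith⟩
    have hmono : (∫ x in A, f x) ≤ ∫ x in Ω ∩ {x : EuclideanSpace ℝ (Fin 3) | (n:ℝ) < ‖x‖}, f x := by
      refine setIntegral_mono_set (hexp.mono_set Set.inter_subset_left) ?_
        (HasSubset.Subset.eventuallyLE hsub)
      exact Filter.Eventually.of_forall fun x => (Real.exp_pos _).le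
    exact lt_of_le_of_lt hmono hn
  -- combine
  have hfin1 : Real.exp L * (∫ x in A, f x) < ε / 2 := by
    have := mul_lt_mul_of_pos_left step5 (Real.exp_pos L)
    calc Real.exp L * (∫ x in A, f x) < Real.exp L * (ε / 2 / Real.exp L) := this
      _ = ε / 2 := by field_simp
  have hfin2 : (∫ x in A, (g x + f x / Real.exp 1)) / L ≤ ε / 2 := by
    have h1 : (∫ x in A, (g x + f x / Real.exp 1)) / L ≤ K / L := by
      exact (div_le_div_iff_of_pos_right hL0).mpr (step3.trans step4)
    have h2 : K / L = ε / 2 := by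
      rw [hL_def]; field_simp
    linarith
  calc ∫ x in A, η x ≤ ∫ x in A, F x := step1
    _ = Real.exp L * (∫ x in A, f x) + (∫ x in A, (g x + f x / Real.exp 1)) / L := step2
    _ < ε / 2 + ε / 2 := by
        have : (∫ x in A, (g x + f x / Real.exp 1)) / L ≤ ε / 2 := hfin2
        linarith
    _ = ε := by ring
end

section
/- Let O ⊆ ℝ^M be a bounded open set, g : ℝ → (-∞, ∞] a lower semicontinuous convex function, and (v_n) a sequence in L¹(O) with v_n ⇀ v weakly in L¹(O), g(v_n) ∈ L¹(O) for each n, and g(v_n) ⇀ h weakly in L¹(O). Then g(v) ≤ h a.e. on O, g(v) ∈ L¹(O), and ∫_O g(v) dy ≤ liminf_{n→∞} ∫_O g(v_n) dy. -/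
open MeasureTheory Real Filter

theorem stmt_9 (M : ℕ) (hM : 1 ≤ M) (O : Set (Fin M → ℝ)) (hO : IsOpen O)
    (hOb : Bornology.IsBounded O) (g : ℝ → EReal)
    (hg_ne_bot : ∀ z, g z ≠ ⊥)
    (hg_lsc : LowerSemicontinuous g)
    (hg_conv : ∀ z w t : ℝ, 0 ≤ t → t ≤ 1 →
      g (t * z + (1 - t) * w) ≤ (t : EReal) * g z + ((1 - t : ℝ) : EReal) * g w)
    (v : ℕ → (Fin M → ℝ) → ℝ) (vlim : (Fin M → ℝ) → ℝ) (h : (Fin M → ℝ) → ℝ)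
    (hv_int : ∀ n, IntegrableOn (v n) O)
    (hvlim_int : IntegrableOn vlim O)
    (hgv_fin : ∀ n, ∀ᵐ y ∂(volume.restrict O), g (v n y) ≠ ⊤)
    (hgv_int : ∀ n, IntegrableOn (fun y => (g (v n y)).toReal) O)
    (hh_int : IntegrableOn h O)
    (hv_weak : ∀ φ : (Fin M → ℝ) → ℝ, Measurable φ → (∃ c, ∀ y, |φ y| ≤ c) →
      Tendsto (fun n => ∫ y in O, v n y * φ y) atTop (nhds (∫ y in O, vlim y * φ y)))
    (hgv_weak : ∀ φ : (Fin M → ℝ) → ℝ, Measurable φ → (∃ c, ∀ y, |φ y| ≤ c) →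
      Tendsto (fun n => ∫ y in O, (g (v n y)).toReal * φ y) atTop
        (nhds (∫ y in O, h y * φ y))) :
    (∀ᵐ y ∂(volume.restrict O), g (vlim y) ≤ (h y : EReal)) ∧
    (∀ᵐ y ∂(volume.restrict O), g (vlim y) ≠ ⊤) ∧
    IntegrableOn (fun y => (g (vlim y)).toReal) O ∧
    (∫ y in O, (g (vlim y)).toReal)
      ≤ liminf (fun n => ∫ y in O, (g (v n y)).toReal) atTop := by
  classical
  haveI hfin : IsFiniteMeasure (volume.restrict O) := by
    constructor
    rw [Measure.restrict_apply_univ]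
    exact hOb.measure_lt_top
  set μ : Measure (Fin M → ℝ) := volume.restrict O with hμdef
  rcases eq_or_ne μ 0 with hμ0 | hμ0
  · refine ⟨?_, ?_, ?_, ?_⟩
    · rw [hμ0]; simp
    · rw [hμ0]; simp
    · show Integrable _ μ
      rw [hμ0]; exact integrable_zero_measure
    · have h1 : (∫ y in O, (g (vlim y)).toReal) = 0 := by
        show (∫ y, _ ∂μ) = 0
        rw [hμ0]; exact integral_zero_measure _
      have h2 : ∀ n, (∫ y in O, (g (v n y)).toReal) = 0 := by
        intro n
        show (∫ y, _ ∂μ) = 0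
        rw [hμ0]; exact integral_zero_measure _
      simp only [integral_zero_measure, hμ0]
      simp [liminf_const]
  haveI hneb : (ae μ).NeBot := ae_neBot.mpr hμ0
  obtain ⟨y₁, hy₁⟩ := (hgv_fin 0).exists
  set z₁ : ℝ := v 0 y₁ with hz₁def
  have hz₁ : g z₁ ≠ ⊤ := hy₁
  -- the epigraph
  set E : Set (ℝ × ℝ) := {p | g p.1 ≤ (p.2 : EReal)} with hEdef
  have hEclosed : IsClosed E := by
    have h1 : IsClosed {p : ℝ × EReal | g p.1 ≤ p.2} := hg_lsc.isClosed_epigraph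
    have h2 : E = (fun p : ℝ × ℝ => (p.1, (p.2 : EReal))) ⁻¹' {p : ℝ × EReal | g p.1 ≤ p.2} :=
      rfl
    rw [h2]
    exact h1.preimage (continuous_fst.prodMk (continuous_coe_real_ereal.comp continuous_snd))
  have hEconv : Convex ℝ E := by
    intro p hp q hq a b ha hb hab
    have hb' : b = 1 - a := by linarith
    subst hb'
    have h1 := hg_conv p.1 q.1 a ha (by linarith)
    show g (a • p + (1-a) • q).1 ≤ (((a • p + (1-a) • q).2 : ℝ) : EReal)
    have e1 : (a • p + (1-a) • q).1 = a * p.1 + (1-a) * q.1 := rfl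
    have e2 : (a • p + (1-a) • q).2 = a * p.2 + (1-a) * q.2 := rfl
    rw [e1, e2]
    refine le_trans h1 ?_
    have m1 : (a : EReal) * g p.1 ≤ (a : EReal) * (p.2 : EReal) :=
      mul_le_mul_of_nonneg_left hp (by exact_mod_cast ha)
    have m2 : ((1-a : ℝ) : EReal) * g q.1 ≤ ((1-a : ℝ) : EReal) * (q.2 : EReal) :=
      mul_le_mul_of_nonneg_left hq (by exact_mod_cast (by linarith : (0:ℝ) ≤ 1 - a))
    calc (a : EReal) * g p.1 + ((1-a:ℝ) : EReal) * g q.1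
        ≤ (a : EReal) * (p.2:EReal) + ((1-a:ℝ) : EReal) * (q.2:EReal) := add_le_add m1 m2
      _ = ((a * p.2 + (1-a) * q.2 : ℝ) : EReal) := by
          rw [← EReal.coe_mul, ← EReal.coe_mul, ← EReal.coe_add]
  have hEmem : ∀ z : ℝ, g z ≠ ⊤ → (z, (g z).toReal) ∈ E := by
    intro z hz
    show g z ≤ (((g z).toReal : ℝ) : EReal)
    rw [EReal.coe_toReal hz (hg_ne_bot z)]
  have hEne : E.Nonempty := ⟨(z₁, (g z₁).toReal), hEmem z₁ hz₁⟩
  -- value of a linear functional on ℝ × ℝ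
  have hfval : ∀ (f : (ℝ × ℝ) →L[ℝ] ℝ) (z t : ℝ),
      f (z, t) = f (1, 0) * z + f (0, 1) * t := by
    intro f z t
    have e : (z, t) = z • ((1:ℝ), (0:ℝ)) + t • ((0:ℝ), (1:ℝ)) := by
      simp [Prod.ext_iff]
    rw [e, map_add, _root_.map_smul, _root_.map_smul, smul_eq_mul, smul_eq_mul]
    ring
  -- second coefficient of a supporting functional is nonneg
  have hβnn : ∀ (f : (ℝ × ℝ) →L[ℝ] ℝ) (c : ℝ), (∀ p ∈ E, c ≤ f p) → 0 ≤ f (0, 1) := by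
    intro f c hc
    by_contra hβ
    push_neg at hβ
    set β : ℝ := f (0, 1)
    set α : ℝ := f (1, 0)
    set T : ℝ := max ((g z₁).toReal) ((c - α * z₁ - 1) / β) with hTdef
    have hTE : (z₁, T) ∈ E := by
      show g z₁ ≤ (T : EReal)
      calc g z₁ = (((g z₁).toReal : ℝ) : EReal) := (EReal.coe_toReal hz₁ (hg_ne_bot z₁)).symm
        _ ≤ (T : EReal) := by exact_mod_cast le_max_left _ _
    have h1 : c ≤ α * z₁ + β * T := by
      have := hc (z₁, T) hTE
      rwa [hfval] at this
    have h2 : β * T ≤ c - α * z₁ - 1 := by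
      have h3 : β * T ≤ β * ((c - α * z₁ - 1) / β) :=
        mul_le_mul_of_nonpos_left (le_max_right _ _) hβ.le
      rwa [mul_div_cancel₀ _ (ne_of_lt hβ)] at h3
    linarith
  -- halfplane minorants give affine minorants when slope positive
  have hminor : ∀ (f : (ℝ × ℝ) →L[ℝ] ℝ) (c : ℝ), (∀ p ∈ E, c ≤ f p) → 0 < f (0, 1) →
      ∀ z : ℝ, (((-(f (1,0)) / f (0,1)) * z + c / f (0,1) : ℝ) : EReal) ≤ g z := by
    intro f c hc hβ z
    by_cases hz : g z = ⊤
    · rw [hz]; exact le_top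
    · have hmem := hEmem z hz
      have h1 := hc _ hmem
      rw [hfval] at h1
      set α : ℝ := f (1, 0)
      set β : ℝ := f (0, 1)
      have h2 : (-α / β) * z + c / β ≤ (g z).toReal := by
        rw [← sub_nonneg]
        have key : (g z).toReal - ((-α / β) * z + c / β)
            = (α * z + β * (g z).toReal - c) / β := by
          field_simp
          ring
        rw [key]
        exact div_nonneg (by linarith) hβ.le
      calc (((-α / β) * z + c / β : ℝ) : EReal) ≤ (((g z).toReal : ℝ) : EReal) := by
            exact_mod_cast h2
        _ = g z := EReal.coe_toReal hz (hg_ne_bot z)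
  -- integrability of products with bounded test functions
  have hmulint : ∀ (φ : (Fin M → ℝ) → ℝ), Measurable φ → (∀ y, |φ y| ≤ 1) →
      ∀ (c : ℝ) (u : (Fin M → ℝ) → ℝ), Integrable u μ →
        Integrable (fun y => u y * (c * φ y)) μ := by
    intro φ hφm hφabs c u hu
    have h1 : Integrable (fun y => (c * φ y) * u y) μ := by
      apply Integrable.bdd_mul hu ((hφm.const_mul c).aestronglyMeasurable)
      refine Filter.Eventually.of_forall (fun y => ?_)
      show ‖c * φ y‖ ≤ |c|
      rw [Real.norm_eq_abs, abs_mul]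
      calc |c| * |φ y| ≤ |c| * 1 := mul_le_mul_of_nonneg_left (hφabs y) (abs_nonneg c)
        _ = |c| := mul_one _
    simpa [mul_comm] using h1
  have hmulint1 : ∀ (φ : (Fin M → ℝ) → ℝ), Measurable φ → (∀ y, |φ y| ≤ 1) →
      ∀ (u : (Fin M → ℝ) → ℝ), Integrable u μ →
        Integrable (fun y => u y * φ y) μ := by
    intro φ hφm hφabs u hu
    have h1 : Integrable (fun y => φ y * u y) μ := by
      apply Integrable.bdd_mul hu hφm.aestronglyMeasurable
      exact Filter.Eventually.of_forall (fun y => show ‖φ y‖ ≤ 1 by rw [Real.norm_eq_abs]; exact hφabs y)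
    simpa [mul_comm] using h1
  -- KEY B : affine minorants pass to the weak limit
  have keyB : ∀ a b : ℝ, (∀ z : ℝ, ((a * z + b : ℝ) : EReal) ≤ g z) →
      ∀ᵐ y ∂μ, a * vlim y + b ≤ h y := by
    intro a b hmin
    have hwint : Integrable (fun y => h y - (a * vlim y + b)) μ :=
      hh_int.sub ((hvlim_int.const_mul a).add (integrable_const b))
    have hnn : 0 ≤ᵐ[μ] fun y => h y - (a * vlim y + b) := by
      apply ae_nonneg_of_forall_setIntegral_nonneg hwint
      intro s ms _
      set φ : (Fin M → ℝ) → ℝ := s.indicator fun _ => (1:ℝ) with hφdef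
      have hφm : Measurable φ := measurable_const.indicator ms
      have hφ0 : ∀ y, 0 ≤ φ y := fun y => Set.indicator_nonneg (fun _ _ => zero_le_one) y
      have hφ1 : ∀ y, φ y ≤ 1 := by
        intro y
        by_cases hy : y ∈ s <;> simp [hφdef, Set.indicator_apply, hy]
      have hφabs : ∀ y, |φ y| ≤ 1 := fun y => abs_le.mpr ⟨by linarith [hφ0 y], hφ1 y⟩
      have hφint : Integrable φ μ := (integrable_const (1:ℝ)).indicator ms
      -- per-n inequality
      have hn : ∀ n, (∫ y, v n y * (a * φ y) ∂μ) + b * (∫ y, φ y ∂μ)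
          ≤ ∫ y, (g (v n y)).toReal * φ y ∂μ := by
        intro n
        have hi1 : Integrable (fun y => v n y * (a * φ y) + b * φ y) μ :=
          (hmulint φ hφm hφabs a _ (hv_int n)).add (hφint.const_mul b)
        have hi2 : Integrable (fun y => (g (v n y)).toReal * φ y) μ :=
          hmulint1 φ hφm hφabs _ (hgv_int n)
        have hle : (∫ y, (v n y * (a * φ y) + b * φ y) ∂μ)
            ≤ ∫ y, (g (v n y)).toReal * φ y ∂μ := by
          apply integral_mono_ae hi1 hi2
          filter_upwards [hgv_fin n] with y hy
          have h1 : ((a * v n y + b : ℝ) : EReal) ≤ g (v n y) := hmin _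
          have h2 : a * v n y + b ≤ (g (v n y)).toReal := by
            have h3 := EReal.toReal_le_toReal h1 (EReal.coe_ne_bot _) hy
            rwa [EReal.toReal_coe] at h3
          have h4 : (a * v n y + b) * φ y ≤ (g (v n y)).toReal * φ y :=
            mul_le_mul_of_nonneg_right h2 (hφ0 y)
          calc v n y * (a * φ y) + b * φ y = (a * v n y + b) * φ y := by ring
            _ ≤ (g (v n y)).toReal * φ y := h4
        rwa [integral_add (hmulint φ hφm hφabs a _ (hv_int n)) (hφint.const_mul b),
          integral_const_mul _ _] at hle
      -- pass to the limit
      have t1 := hgv_weak φ hφm ⟨1, hφabs⟩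
      have t2 := hv_weak (fun y => a * φ y) (hφm.const_mul a)
        ⟨|a|, fun y => by
          rw [abs_mul]
          calc |a| * |φ y| ≤ |a| * 1 := mul_le_mul_of_nonneg_left (hφabs y) (abs_nonneg a)
            _ = |a| := mul_one _⟩
      have t2' : Tendsto (fun n => (∫ y, v n y * (a * φ y) ∂μ) + b * ∫ y, φ y ∂μ) atTop
          (nhds ((∫ y, vlim y * (a * φ y) ∂μ) + b * ∫ y, φ y ∂μ)) :=
        t2.add_const _
      have hlim : (∫ y, vlim y * (a * φ y) ∂μ) + b * (∫ y, φ y ∂μ)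
          ≤ ∫ y, h y * φ y ∂μ :=
        le_of_tendsto_of_tendsto' t2' t1 hn
      have e3 : (∫ x in s, (h x - (a * vlim x + b)) ∂μ)
          = (∫ y, h y * φ y ∂μ)
            - ((∫ y, vlim y * (a * φ y) ∂μ) + b * (∫ y, φ y ∂μ)) := by
        rw [← integral_indicator ms]
        have e4 : ∀ y, (Set.indicator s fun x => h x - (a * vlim x + b)) y
            = h y * φ y - (vlim y * (a * φ y) + b * φ y) := by
          intro y
          by_cases hy : y ∈ s
          · simp only [Set.indicator_of_mem hy, hφdef]
            ring
          · simp [Set.indicator_of_notMem hy, hφdef, hy]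
        simp only [e4]
        have ha1 : Integrable (fun y => vlim y * (a * φ y) + b * φ y) μ :=
          (hmulint φ hφm hφabs a _ hvlim_int).add (hφint.const_mul b)
        have ha2 : Integrable (fun y => h y * φ y) μ := hmulint1 φ hφm hφabs _ hh_int
        rw [integral_sub ha2 ha1,
          integral_add (hmulint φ hφm hφabs a _ hvlim_int) (hφint.const_mul b),
          integral_const_mul _ _]
      rw [e3]
      linarith
    filter_upwards [hnn] with y hy
    simp only [Pi.zero_apply] at hy
    linarith
  -- KEY B2 : vertical halfplanes
  have keyB2 : ∀ a c : ℝ, (∀ z : ℝ, g z ≠ ⊤ → c ≤ a * z) →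
      ∀ᵐ y ∂μ, c ≤ a * vlim y := by
    intro a c hzz
    have hwint : Integrable (fun y => a * vlim y - c) μ :=
      (hvlim_int.const_mul a).sub (integrable_const c)
    have hnn : 0 ≤ᵐ[μ] fun y => a * vlim y - c := by
      apply ae_nonneg_of_forall_setIntegral_nonneg hwint
      intro s ms _
      set φ : (Fin M → ℝ) → ℝ := s.indicator fun _ => (1:ℝ) with hφdef
      have hφm : Measurable φ := measurable_const.indicator ms
      have hφ0 : ∀ y, 0 ≤ φ y := fun y => Set.indicator_nonneg (fun _ _ => zero_le_one) y
      have hφ1 : ∀ y, φ y ≤ 1 := by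
        intro y
        by_cases hy : y ∈ s <;> simp [hφdef, Set.indicator_apply, hy]
      have hφabs : ∀ y, |φ y| ≤ 1 := fun y => abs_le.mpr ⟨by linarith [hφ0 y], hφ1 y⟩
      have hφint : Integrable φ μ := (integrable_const (1:ℝ)).indicator ms
      have hn : ∀ n, c * (∫ y, φ y ∂μ) ≤ ∫ y, v n y * (a * φ y) ∂μ := by
        intro n
        have hpt : ∀ᵐ y ∂μ, c * φ y ≤ v n y * (a * φ y) := by
          filter_upwards [hgv_fin n] with y hy
          have h1 : c ≤ a * v n y := hzz _ hy
          calc c * φ y ≤ (a * v n y) * φ y := mul_le_mul_of_nonneg_right h1 (hφ0 y)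
            _ = v n y * (a * φ y) := by ring
        have h2 := integral_mono_ae (hφint.const_mul c)
          (hmulint φ hφm hφabs a _ (hv_int n)) hpt
        rwa [integral_const_mul _ _] at h2
      have t2 := hv_weak (fun y => a * φ y) (hφm.const_mul a)
        ⟨|a|, fun y => by
          rw [abs_mul]
          calc |a| * |φ y| ≤ |a| * 1 := mul_le_mul_of_nonneg_left (hφabs y) (abs_nonneg a)
            _ = |a| := mul_one _⟩
      have hlim : c * (∫ y, φ y ∂μ) ≤ ∫ y, vlim y * (a * φ y) ∂μ :=
        ge_of_tendsto' t2 hn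
      have e3 : (∫ x in s, (a * vlim x - c) ∂μ)
          = (∫ y, vlim y * (a * φ y) ∂μ) - c * (∫ y, φ y ∂μ) := by
        rw [← integral_indicator ms]
        have e4 : ∀ y, (Set.indicator s fun x => a * vlim x - c) y
            = vlim y * (a * φ y) - c * φ y := by
          intro y
          by_cases hy : y ∈ s
          · simp only [Set.indicator_of_mem hy, hφdef]
            ring
          · simp [Set.indicator_of_notMem hy, hφdef, hy]
        simp only [e4]
        rw [integral_sub (hmulint φ hφm hφabs a _ hvlim_int) (hφint.const_mul c),
          integral_const_mul _ _]
      rw [e3]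
      linarith
    filter_upwards [hnn] with y hy
    simp only [Pi.zero_apply] at hy
    linarith
  -- KEY halfplane lemma
  have keyHalf : ∀ (f : (ℝ × ℝ) →L[ℝ] ℝ) (c : ℝ), (∀ p ∈ E, c ≤ f p) →
      ∀ᵐ y ∂μ, c ≤ f (vlim y, h y) := by
    intro f c hc
    have hβ := hβnn f c hc
    rcases lt_or_eq_of_le hβ with hβpos | hβ0
    · have hmin := hminor f c hc hβpos
      filter_upwards [keyB _ _ hmin] with y hy
      rw [hfval]
      set α : ℝ := f (1, 0)
      set β : ℝ := f (0, 1)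
      have h1 : β * ((-α / β) * vlim y + c / β) ≤ β * h y :=
        mul_le_mul_of_nonneg_left hy hβpos.le
      have h2 : β * ((-α / β) * vlim y + c / β) = -(α * vlim y) + c := by
        field_simp
      rw [h2] at h1
      linarith
    · have hvert : ∀ z : ℝ, g z ≠ ⊤ → c ≤ f (1,0) * z := by
        intro z hz
        have h1 := hc _ (hEmem z hz)
        rw [hfval, ← hβ0] at h1
        linarith
      filter_upwards [keyB2 _ _ hvert] with y hy
      rw [hfval, ← hβ0]
      linarith
  -- separation from rational balls
  have keyBall : ∀ (q : ℝ × ℝ) (r : ℝ), 0 < r → Metric.ball q r ∩ E = ∅ →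
      ∀ᵐ y ∂μ, (vlim y, h y) ∉ Metric.ball q (r / 2) := by
    intro q r hr hqr
    have hdisj : Disjoint (Metric.closedBall q (r/2)) E := by
      rw [Set.disjoint_left]
      intro x hx hxE
      have : x ∈ Metric.ball q r ∩ E := by
        constructor
        · exact Metric.mem_ball.mpr (lt_of_le_of_lt (Metric.mem_closedBall.mp hx) (by linarith))
        · exact hxE
      rw [hqr] at this
      exact this
    obtain ⟨f, u, vv, hfu, huv, hfE⟩ :=
      geometric_hahn_banach_compact_closed (convex_closedBall q (r/2))
        (isCompact_closedBall q (r/2)) hEconv hEclosed hdisj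
    filter_upwards [keyHalf f vv (fun p hp => (hfE p hp).le)] with y hy hball
    have h1 : f (vlim y, h y) < u :=
      hfu _ (Metric.ball_subset_closedBall hball)
    linarith
  -- a.e. the pair lies in the epigraph
  have hPE : ∀ᵐ y ∂μ, (vlim y, h y) ∈ E := by
    have hQ : ∀ᵐ y ∂μ, ∀ (q₁ q₂ r : ℚ), ((0:ℝ) < r ∧
        Metric.ball (((q₁:ℝ)), ((q₂:ℝ))) r ∩ E = ∅) →
        (vlim y, h y) ∉ Metric.ball (((q₁:ℝ)), ((q₂:ℝ))) ((r:ℝ) / 2) := by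
      rw [ae_all_iff]
      intro q₁
      rw [ae_all_iff]
      intro q₂
      rw [ae_all_iff]
      intro r
      by_cases hcond : (0:ℝ) < r ∧ Metric.ball (((q₁:ℝ)), ((q₂:ℝ))) r ∩ E = ∅
      · filter_upwards [keyBall _ _ hcond.1 hcond.2] with y hy _
        exact hy
      · filter_upwards with y hcc
        exact absurd hcc hcond
    filter_upwards [hQ] with y hy
    by_contra hPnE
    set P : ℝ × ℝ := (vlim y, h y)
    have hd : 0 < Metric.infDist P E := (hEclosed.notMem_iff_infDist_pos hEne).1 hPnE
    set d : ℝ := Metric.infDist P E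
    obtain ⟨q₁, hq₁a, hq₁b⟩ := exists_rat_btwn (show P.1 - d/8 < P.1 by linarith)
    obtain ⟨q₂, hq₂a, hq₂b⟩ := exists_rat_btwn (show P.2 - d/8 < P.2 by linarith)
    obtain ⟨r, hra, hrb⟩ := exists_rat_btwn (show d/4 < d/2 by linarith)
    have hdistq : dist P (((q₁:ℝ)), ((q₂:ℝ))) < d/8 := by
      rw [Prod.dist_eq]
      apply max_lt
      · rw [Real.dist_eq, abs_lt]; constructor <;> [linarith; linarith]
      · rw [Real.dist_eq, abs_lt]; constructor <;> [linarith; linarith]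
    have hball : Metric.ball (((q₁:ℝ)), ((q₂:ℝ))) (r:ℝ) ∩ E = ∅ := by
      rw [Set.eq_empty_iff_forall_notMem]
      rintro x ⟨hx1, hx2⟩
      have h1 : Metric.infDist P E ≤ dist P x := Metric.infDist_le_dist_of_mem hx2
      have h2 : dist P x ≤ dist P (((q₁:ℝ)), ((q₂:ℝ))) + dist (((q₁:ℝ)), ((q₂:ℝ))) x :=
        dist_triangle _ _ _
      have h3 : dist (((q₁:ℝ)), ((q₂:ℝ))) x < (r:ℝ) := by
        rw [dist_comm]; exact Metric.mem_ball.mp hx1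
      have : d ≤ dist P x := h1
      linarith
    have := hy q₁ q₂ r ⟨by linarith, hball⟩
    apply this
    rw [Metric.mem_ball]
    linarith
  -- conclusions
  have hfin1 : ∀ᵐ y ∂μ, g (vlim y) ≤ ((h y : ℝ) : EReal) := by
    filter_upwards [hPE] with y hy
    exact hy
  have hfin2 : ∀ᵐ y ∂μ, g (vlim y) ≠ ⊤ := by
    filter_upwards [hfin1] with y hy
    exact ne_top_of_le_ne_top (EReal.coe_ne_top _) hy
  -- a fixed affine minorant
  have hp₀ : ((z₁, (g z₁).toReal - 1) : ℝ × ℝ) ∉ E := by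
    intro hmem
    have h1 : g z₁ ≤ (((g z₁).toReal - 1 : ℝ) : EReal) := hmem
    have h2 := EReal.toReal_le_toReal h1 (hg_ne_bot z₁) (EReal.coe_ne_top _)
    rw [EReal.toReal_coe] at h2
    linarith
  obtain ⟨f₀, u₀, hfu₀, hfE₀⟩ := geometric_hahn_banach_point_closed hEconv hEclosed hp₀
  have hβ₀ : 0 ≤ f₀ (0, 1) := hβnn f₀ u₀ (fun p hp => (hfE₀ p hp).le)
  have hβ₀pos : 0 < f₀ (0, 1) := by
    rcases lt_or_eq_of_le hβ₀ with hpos | heq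
    · exact hpos
    · exfalso
      have h1 := hfE₀ _ (hEmem z₁ hz₁)
      rw [hfval] at h1
      have h2 : f₀ (z₁, (g z₁).toReal - 1)
          = f₀ (1, 0) * z₁ + f₀ (0, 1) * ((g z₁).toReal - 1) := hfval _ _ _
      rw [← heq] at h1 h2
      rw [h2] at hfu₀
      linarith
  set a₀ : ℝ := -(f₀ (1, 0)) / f₀ (0, 1) with ha₀def
  set b₀ : ℝ := u₀ / f₀ (0, 1) with hb₀def
  have hmin₀ : ∀ z : ℝ, ((a₀ * z + b₀ : ℝ) : EReal) ≤ g z :=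
    hminor f₀ u₀ (fun p hp => (hfE₀ p hp).le) hβ₀pos
  have hlow : ∀ᵐ y ∂μ, a₀ * vlim y + b₀ ≤ (g (vlim y)).toReal
      ∧ (g (vlim y)).toReal ≤ h y := by
    filter_upwards [hfin1, hfin2] with y hy hy2
    constructor
    · have h1 := EReal.toReal_le_toReal (hmin₀ (vlim y)) (EReal.coe_ne_bot _) hy2
      rwa [EReal.toReal_coe] at h1
    · have h1 := EReal.toReal_le_toReal hy (hg_ne_bot _) (EReal.coe_ne_top _)
      rwa [EReal.toReal_coe] at h1
  have hmeas : AEStronglyMeasurable (fun y => (g (vlim y)).toReal) μ := by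
    have h1 : Measurable fun z : ℝ => (g z).toReal :=
      measurable_ereal_toReal.comp hg_lsc.measurable
    exact (h1.comp_aemeasurable hvlim_int.aemeasurable).aestronglyMeasurable
  have hint : Integrable (fun y => (g (vlim y)).toReal) μ := by
    apply Integrable.mono'
      (g := fun y => |h y| + (|a₀| * |vlim y| + |b₀|)) ?_ hmeas ?_
    · exact hh_int.abs.add ((hvlim_int.abs.const_mul _).add (integrable_const _))
    · filter_upwards [hlow] with y hy
      rw [Real.norm_eq_abs, abs_le]
      have habs : |a₀ * vlim y + b₀| ≤ |a₀| * |vlim y| + |b₀| := by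
        calc |a₀ * vlim y + b₀| ≤ |a₀ * vlim y| + |b₀| := abs_add_le _ _
          _ = |a₀| * |vlim y| + |b₀| := by rw [abs_mul]
      constructor
      · have h1 := neg_abs_le (a₀ * vlim y + b₀)
        have h2 := abs_nonneg (h y)
        linarith [hy.1]
      · have h1 := le_abs_self (h y)
        have h2 : (0:ℝ) ≤ |a₀| * |vlim y| + |b₀| := by positivity
        linarith [hy.2]
  have hIle : (∫ y, (g (vlim y)).toReal ∂μ) ≤ ∫ y, h y ∂μ :=
    integral_mono_ae hint hh_int (by filter_upwards [hlow] with y hy; exact hy.2)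
  have hlimInt : Tendsto (fun n => ∫ y, (g (v n y)).toReal ∂μ) atTop
      (nhds (∫ y, h y ∂μ)) := by
    have h1 := hgv_weak (fun _ => 1) measurable_const ⟨1, fun y => by norm_num⟩
    simpa using h1
  have hliminf : liminf (fun n => ∫ y, (g (v n y)).toReal ∂μ) atTop = ∫ y, h y ∂μ :=
    hlimInt.liminf_eq
  refine ⟨hfin1, hfin2, hint, ?_⟩
  show (∫ y, (g (vlim y)).toReal ∂μ)
      ≤ liminf (fun n => ∫ y, (g (v n y)).toReal ∂μ) atTop
  rw [hliminf]
  exact hIle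
end

section
/- Let O ⊆ ℝ^M be a bounded open set, g : ℝ → ℝ convex and strictly convex on an open interval (a,b) ⊆ ℝ, and (v_n) a sequence with v_n ⇀ v in L¹(O), g(v_n) ⇀ g(v) in L¹(O) (i.e. the weak limit of g(v_n) equals g(v) a.e.). Then, after passing to a subsequence, v_n(y) → v(y) for a.e. y in the set {y ∈ O : v(y) ∈ (a,b)}. -/
open MeasureTheory Real Filter

noncomputable def sg (g : ℝ → ℝ) (x : ℝ) : ℝ :=
  sInf ((fun t => (g t - g x) / (t - x)) '' Set.Ioi x)

lemma sg_bddBelow {g : ℝ → ℝ} (hg : ConvexOn ℝ Set.univ g) (x : ℝ) :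
    BddBelow ((fun t => (g t - g x) / (t - x)) '' Set.Ioi x) := by
  refine ⟨(g x - g (x - 1)) / (x - (x - 1)), ?_⟩
  rintro r ⟨t, ht, rfl⟩
  exact hg.slope_mono_adjacent (Set.mem_univ _) (Set.mem_univ _) (by linarith) ht

lemma sg_le_slope {g : ℝ → ℝ} (hg : ConvexOn ℝ Set.univ g) {x t : ℝ} (h : x < t) :
    sg g x ≤ (g t - g x) / (t - x) :=
  csInf_le (sg_bddBelow hg x) ⟨t, h, rfl⟩

lemma slope_le_sg {g : ℝ → ℝ} (hg : ConvexOn ℝ Set.univ g) {w x : ℝ} (h : w < x) :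
    (g x - g w) / (x - w) ≤ sg g x := by
  refine le_csInf ⟨(g (x + 1) - g x) / (x + 1 - x), ⟨x + 1, by simp, rfl⟩⟩ ?_
  rintro r ⟨t, ht, rfl⟩
  exact hg.slope_mono_adjacent (Set.mem_univ _) (Set.mem_univ _) h ht

lemma sg_subgradient {g : ℝ → ℝ} (hg : ConvexOn ℝ Set.univ g) (x t : ℝ) :
    g x + sg g x * (t - x) ≤ g t := by
  rcases lt_trichotomy t x with h | h | h
  · have h1 := slope_le_sg hg h
    have h2 : g x - g t ≤ sg g x * (x - t) := by
      rw [div_le_iff₀ (by linarith : (0:ℝ) < x - t)] at h1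
      linarith
    nlinarith [h2]
  · simp [h]
  · have h1 := sg_le_slope hg h
    rw [le_div_iff₀ (by linarith : (0:ℝ) < t - x)] at h1
    linarith

lemma sg_mono {g : ℝ → ℝ} (hg : ConvexOn ℝ Set.univ g) : Monotone (sg g) := by
  intro x y hxy
  rcases eq_or_lt_of_le hxy with rfl | hxy
  · exact le_rfl
  · refine le_csInf ⟨(g (y + 1) - g y) / (y + 1 - y), ⟨y + 1, by simp, rfl⟩⟩ ?_
    rintro r ⟨t, ht, rfl⟩
    calc sg g x ≤ (g y - g x) / (y - x) := sg_le_slope hg hxy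
      _ ≤ (g t - g y) / (t - y) :=
        hg.slope_mono_adjacent (Set.mem_univ _) (Set.mem_univ _) hxy ht

lemma sg_gap_pos {g : ℝ → ℝ} (hg : ConvexOn ℝ Set.univ g) {a b : ℝ}
    (hs : StrictConvexOn ℝ (Set.Ioo a b) g) {x₀ p : ℝ} (hx : x₀ ∈ Set.Ioo a b)
    (hp : p ∈ Set.Ioo a b) (hne : x₀ ≠ p) :
    0 < g p - g x₀ - sg g x₀ * (p - x₀) := by
  have hsub := sg_subgradient hg x₀ p
  rcases (by linarith : (0:ℝ) ≤ g p - g x₀ - sg g x₀ * (p - x₀)).lt_or_eq with h | h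
  · exact h
  · exfalso
    have hm := hs.2 hx hp hne one_half_pos one_half_pos (by norm_num)
    simp only [smul_eq_mul] at hm
    have hm2 := sg_subgradient hg x₀ (1/2 * x₀ + 1/2 * p)
    nlinarith [hm, hm2, h]

lemma sg_growth_right {g : ℝ → ℝ} (hg : ConvexOn ℝ Set.univ g) {x₀ p u : ℝ}
    (h1 : x₀ < p) (h2 : p ≤ u) :
    g p - g x₀ - sg g x₀ * (p - x₀) ≤ g u - g x₀ - sg g x₀ * (u - x₀) := by
  have hnn : 0 ≤ g p - g x₀ - sg g x₀ * (p - x₀) := by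
    have := sg_subgradient hg x₀ p; linarith
  rcases eq_or_lt_of_le h2 with rfl | h2
  · exact le_rfl
  · have cross := hg.secant_mono (Set.mem_univ x₀) (Set.mem_univ p) (Set.mem_univ u)
      (ne_of_gt h1) (ne_of_gt (h1.trans h2)) h2.le
    rw [div_le_div_iff₀ (by linarith) (by linarith)] at cross
    nlinarith [cross, mul_nonneg hnn (show (0:ℝ) ≤ u - p by linarith), h1]

lemma sg_growth_left {g : ℝ → ℝ} (hg : ConvexOn ℝ Set.univ g) {x₀ q u : ℝ}
    (h1 : q < x₀) (h2 : u ≤ q) :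
    g q - g x₀ - sg g x₀ * (q - x₀) ≤ g u - g x₀ - sg g x₀ * (u - x₀) := by
  have hnn : 0 ≤ g q - g x₀ - sg g x₀ * (q - x₀) := by
    have := sg_subgradient hg x₀ q; linarith
  rcases eq_or_lt_of_le h2 with rfl | h2
  · exact le_rfl
  · have cross := hg.secant_mono (Set.mem_univ x₀) (Set.mem_univ u) (Set.mem_univ q)
      (ne_of_lt (h2.trans h1)) (ne_of_lt h1) h2.le
    have e1 : (g u - g x₀) / (u - x₀) = (g x₀ - g u) / (x₀ - u) := by
      rw [← neg_div_neg_eq]; ring_nf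
    have e2 : (g q - g x₀) / (q - x₀) = (g x₀ - g q) / (x₀ - q) := by
      rw [← neg_div_neg_eq]; ring_nf
    rw [e1, e2, div_le_div_iff₀ (by linarith) (by linarith)] at cross
    nlinarith [cross, mul_nonneg hnn (show (0:ℝ) ≤ q - u by linarith), h1]

lemma sg_ptwise {g : ℝ → ℝ} (hg : ConvexOn ℝ Set.univ g) {a b : ℝ}
    (hs : StrictConvexOn ℝ (Set.Ioo a b) g) {x₀ : ℝ} (hx : x₀ ∈ Set.Ioo a b) {t : ℕ → ℝ}
    (ht : Filter.Tendsto (fun k => g (t k) - g x₀ - sg g x₀ * (t k - x₀))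
      Filter.atTop (nhds 0)) :
    Filter.Tendsto t Filter.atTop (nhds x₀) := by
  rw [Metric.tendsto_atTop] at ht ⊢
  intro ε hε
  have hxa : a < x₀ := hx.1
  have hxb : x₀ < b := hx.2
  set ε' : ℝ := min (ε / 2) (min ((x₀ - a) / 2) ((b - x₀) / 2)) with hε'def
  have hε' : 0 < ε' := lt_min (by linarith) (lt_min (by linarith) (by linarith))
  have hε'1 : ε' ≤ ε / 2 := min_le_left _ _
  have hε'2 : ε' ≤ (x₀ - a) / 2 := (min_le_right _ _).trans (min_le_left _ _)
  have hε'3 : ε' ≤ (b - x₀) / 2 := (min_le_right _ _).trans (min_le_right _ _)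
  have hpmem : x₀ + ε' ∈ Set.Ioo a b := ⟨by linarith, by linarith⟩
  have hqmem : x₀ - ε' ∈ Set.Ioo a b := ⟨by linarith, by linarith⟩
  have hFp : 0 < g (x₀ + ε') - g x₀ - sg g x₀ * ((x₀ + ε') - x₀) :=
    sg_gap_pos hg hs hx hpmem (by intro hh; nlinarith)
  have hFq : 0 < g (x₀ - ε') - g x₀ - sg g x₀ * ((x₀ - ε') - x₀) :=
    sg_gap_pos hg hs hx hqmem (by intro hh; nlinarith)
  set δ : ℝ := min (g (x₀ + ε') - g x₀ - sg g x₀ * ((x₀ + ε') - x₀))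
    (g (x₀ - ε') - g x₀ - sg g x₀ * ((x₀ - ε') - x₀)) with hδdef
  have hδ : 0 < δ := lt_min hFp hFq
  obtain ⟨N, hN⟩ := ht δ hδ
  refine ⟨N, fun k hk => ?_⟩
  have h1 := hN k hk
  rw [Real.dist_eq, sub_zero] at h1
  have h2 : g (t k) - g x₀ - sg g x₀ * (t k - x₀) < δ := (le_abs_self _).trans_lt h1
  rw [Real.dist_eq]
  by_contra hcon
  push_neg at hcon
  rcases abs_cases (t k - x₀) with ⟨he, _⟩ | ⟨he, _⟩
  · have hup : x₀ + ε' ≤ t k := by rw [he] at hcon; linarith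
    have := sg_growth_right hg (show x₀ < x₀ + ε' by linarith) hup
    have hδp : δ ≤ g (x₀ + ε') - g x₀ - sg g x₀ * ((x₀ + ε') - x₀) := min_le_left _ _
    linarith
  · have huq : t k ≤ x₀ - ε' := by rw [he] at hcon; linarith
    have := sg_growth_left hg (show x₀ - ε' < x₀ by linarith) huq
    have hδq : δ ≤ g (x₀ - ε') - g x₀ - sg g x₀ * ((x₀ - ε') - x₀) := min_le_right _ _
    linarith

theorem stmt_10 (M : ℕ) (hM : 1 ≤ M) (O : Set (Fin M → ℝ)) (hO : IsOpen O)
    (hOb : Bornology.IsBounded O) (a b : ℝ) (hab : a < b) (g : ℝ → ℝ)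
    (hg_conv : ConvexOn ℝ Set.univ g)
    (hg_strict : StrictConvexOn ℝ (Set.Ioo a b) g)
    (v : ℕ → (Fin M → ℝ) → ℝ) (vlim : (Fin M → ℝ) → ℝ)
    (hv_int : ∀ n, IntegrableOn (v n) O) (hvlim_int : IntegrableOn vlim O)
    (hgv_int : ∀ n, IntegrableOn (fun y => g (v n y)) O)
    (hgvlim_int : IntegrableOn (fun y => g (vlim y)) O)
    (hv_weak : ∀ φ : (Fin M → ℝ) → ℝ, Measurable φ → (∃ c, ∀ y, |φ y| ≤ c) →
      Tendsto (fun n => ∫ y in O, v n y * φ y) atTop (nhds (∫ y in O, vlim y * φ y)))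
    (hgv_weak : ∀ φ : (Fin M → ℝ) → ℝ, Measurable φ → (∃ c, ∀ y, |φ y| ≤ c) →
      Tendsto (fun n => ∫ y in O, g (v n y) * φ y) atTop
        (nhds (∫ y in O, g (vlim y) * φ y))) :
    ∃ ψ : ℕ → ℕ, StrictMono ψ ∧
      ∀ᵐ y ∂(volume.restrict O), vlim y ∈ Set.Ioo a b →
        Tendsto (fun k => v (ψ k) y) atTop (nhds (vlim y)) := by
  have hvm : AEStronglyMeasurable vlim (volume.restrict O) := hvlim_int.aestronglyMeasurable
  set w : (Fin M → ℝ) → ℝ := hvm.mk vlim with hw_def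
  have hw_meas : Measurable w := hvm.measurable_mk
  have hw_ae : vlim =ᵐ[volume.restrict O] w := hvm.ae_eq_mk
  have hsmono := sg_mono hg_conv
  have hsmeas : Measurable (sg g) := hsmono.measurable
  set A : Set (Fin M → ℝ) := w ⁻¹' (Set.Ioo a b) with hA_def
  have hA : MeasurableSet A := hw_meas measurableSet_Ioo
  set φ₁ : (Fin M → ℝ) → ℝ := A.indicator (fun _ => (1:ℝ)) with hφ₁
  set φ₂ : (Fin M → ℝ) → ℝ := A.indicator (fun y => sg g (w y)) with hφ₂
  have hφ₁_meas : Measurable φ₁ := measurable_const.indicator hA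
  have hφ₂_meas : Measurable φ₂ := (hsmeas.comp hw_meas).indicator hA
  have hφ₁_bdd : ∀ y, |φ₁ y| ≤ 1 := by
    intro y
    by_cases hy : y ∈ A <;>
      simp [hφ₁, Set.indicator_of_mem, Set.indicator_of_notMem, hy]
  set C : ℝ := max |sg g a| |sg g b| with hC
  have hC0 : 0 ≤ C := le_trans (abs_nonneg _) (le_max_left _ _)
  have hφ₂_bdd : ∀ y, |φ₂ y| ≤ C := by
    intro y
    by_cases hy : y ∈ A
    · rw [hφ₂, Set.indicator_of_mem hy]
      have hy' : w y ∈ Set.Ioo a b := hy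
      have h1 : sg g a ≤ sg g (w y) := hsmono hy'.1.le
      have h2 : sg g (w y) ≤ sg g b := hsmono hy'.2.le
      rw [abs_le]
      constructor
      · have : -C ≤ -|sg g a| := neg_le_neg (le_max_left _ _)
        linarith [neg_abs_le (sg g a)]
      · have : |sg g b| ≤ C := le_max_right _ _
        linarith [le_abs_self (sg g b)]
    · rw [hφ₂, Set.indicator_of_notMem hy]
      simpa using hC0
  set G : ℕ → (Fin M → ℝ) → ℝ :=
    fun n y => g (v n y) * φ₁ y - g (w y) * φ₁ y - v n y * φ₂ y + w y * φ₂ y with hG_def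
  have hGnn : ∀ n y, 0 ≤ G n y := by
    intro n y
    by_cases hy : y ∈ A
    · have hsub := sg_subgradient hg_conv (w y) (v n y)
      simp only [hG_def, hφ₁, hφ₂, Set.indicator_of_mem hy]
      nlinarith [hsub]
    · simp [hG_def, hφ₁, hφ₂, Set.indicator_of_notMem hy]
  have int_gw : IntegrableOn (fun y => g (w y)) O :=
    hgvlim_int.congr (hw_ae.mono fun y hy => by simp only [hy])
  have int_w : IntegrableOn w O := hvlim_int.congr hw_ae
  have mk_int : ∀ (F : (Fin M → ℝ) → ℝ) (φ : (Fin M → ℝ) → ℝ) (c : ℝ),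
      IntegrableOn F O → Measurable φ → (∀ y, |φ y| ≤ c) →
      IntegrableOn (fun y => F y * φ y) O := by
    intro F φ c hF hφ hc
    have := Integrable.bdd_mul (c := c) hF hφ.aestronglyMeasurable
      (ae_of_all _ fun y => by simpa [Real.norm_eq_abs] using hc y)
    exact this.congr (ae_of_all _ fun y => mul_comm _ _)
  have i1 : ∀ n, IntegrableOn (fun y => g (v n y) * φ₁ y) O :=
    fun n => mk_int _ _ _ (hgv_int n) hφ₁_meas hφ₁_bdd
  have i2 : IntegrableOn (fun y => g (w y) * φ₁ y) O := mk_int _ _ _ int_gw hφ₁_meas hφ₁_bdd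
  have i3 : ∀ n, IntegrableOn (fun y => v n y * φ₂ y) O :=
    fun n => mk_int _ _ _ (hv_int n) hφ₂_meas hφ₂_bdd
  have i4 : IntegrableOn (fun y => w y * φ₂ y) O := mk_int _ _ _ int_w hφ₂_meas hφ₂_bdd
  have hGint : ∀ n, Integrable (G n) (volume.restrict O) :=
    fun n => (((i1 n).sub i2).sub (i3 n)).add i4
  have hint_eq : ∀ n, ∫ y in O, G n y =
      (∫ y in O, g (v n y) * φ₁ y) - (∫ y in O, g (w y) * φ₁ y)
        - (∫ y in O, v n y * φ₂ y) + (∫ y in O, w y * φ₂ y) := by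
    intro n
    have e1 : ∫ y in O, (g (v n y) * φ₁ y - g (w y) * φ₁ y) =
        (∫ y in O, g (v n y) * φ₁ y) - ∫ y in O, g (w y) * φ₁ y := integral_sub (i1 n) i2
    have e2 : ∫ y in O, (g (v n y) * φ₁ y - g (w y) * φ₁ y - v n y * φ₂ y) =
        (∫ y in O, (g (v n y) * φ₁ y - g (w y) * φ₁ y)) - ∫ y in O, v n y * φ₂ y :=
      integral_sub ((i1 n).sub i2) (i3 n)
    have e3 : ∫ y in O, (g (v n y) * φ₁ y - g (w y) * φ₁ y - v n y * φ₂ y + w y * φ₂ y) =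
        (∫ y in O, (g (v n y) * φ₁ y - g (w y) * φ₁ y - v n y * φ₂ y)) + ∫ y in O, w y * φ₂ y :=
      integral_add (((i1 n).sub i2).sub (i3 n)) i4
    simp only [hG_def]
    rw [e3, e2, e1]
  have hlim : Tendsto (fun n => ∫ y in O, G n y) atTop (nhds 0) := by
    have l1 := hgv_weak φ₁ hφ₁_meas ⟨1, hφ₁_bdd⟩
    have l3 := hv_weak φ₂ hφ₂_meas ⟨C, hφ₂_bdd⟩
    have h0 : Tendsto (fun n => (∫ y in O, g (v n y) * φ₁ y) - (∫ y in O, g (w y) * φ₁ y)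
        - (∫ y in O, v n y * φ₂ y) + (∫ y in O, w y * φ₂ y)) atTop
        (nhds ((∫ y in O, g (vlim y) * φ₁ y) - (∫ y in O, g (w y) * φ₁ y)
          - (∫ y in O, vlim y * φ₂ y) + (∫ y in O, w y * φ₂ y))) :=
      ((l1.sub tendsto_const_nhds).sub l3).add tendsto_const_nhds
    have e2 : ∫ y in O, g (vlim y) * φ₁ y = ∫ y in O, g (w y) * φ₁ y :=
      integral_congr_ae (hw_ae.mono fun y hy => by simp only [hy])
    have e4 : ∫ y in O, vlim y * φ₂ y = ∫ y in O, w y * φ₂ y :=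
      integral_congr_ae (hw_ae.mono fun y hy => by simp only [hy])
    have hzero : (∫ y in O, g (vlim y) * φ₁ y) - (∫ y in O, g (w y) * φ₁ y)
        - (∫ y in O, vlim y * φ₂ y) + (∫ y in O, w y * φ₂ y) = 0 := by
      rw [e2, e4]; ring
    rw [hzero] at h0
    exact Tendsto.congr (fun n => (hint_eq n).symm) h0
  have helps : Tendsto (fun n => eLpNorm (G n - 0) 1 (volume.restrict O)) atTop (nhds 0) := by
    have heq : ∀ n, eLpNorm (G n - 0) 1 (volume.restrict O) =
        ENNReal.ofReal (∫ y in O, G n y) := by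
      intro n
      rw [sub_zero, eLpNorm_one_eq_lintegral_enorm,
        ofReal_integral_eq_lintegral_ofReal (hGint n) (ae_of_all _ (hGnn n))]
      exact lintegral_congr fun y => Real.enorm_eq_ofReal (hGnn n y)
    have := ENNReal.tendsto_ofReal hlim
    simp only [ENNReal.ofReal_zero] at this
    exact Tendsto.congr (fun n => (heq n).symm) this
  have htm : TendstoInMeasure (volume.restrict O) G atTop 0 :=
    tendstoInMeasure_of_tendsto_eLpNorm (p := 1) one_ne_zero
      (fun n => (hGint n).aestronglyMeasurable) aestronglyMeasurable_const helps
  obtain ⟨ψ, hψ, hae⟩ := htm.exists_seq_tendsto_ae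
  refine ⟨ψ, hψ, ?_⟩
  filter_upwards [hae, hw_ae] with y hy hwy
  intro hmem
  have hx0 : w y ∈ Set.Ioo a b := by rw [← hwy]; exact hmem
  have hyA : y ∈ A := hx0
  have hG_eq : ∀ k, G (ψ k) y =
      g (v (ψ k) y) - g (w y) - sg g (w y) * (v (ψ k) y - w y) := by
    intro k
    simp only [hG_def, hφ₁, hφ₂, Set.indicator_of_mem hyA]
    ring
  have hy0 : Tendsto (fun k => g (v (ψ k) y) - g (w y) - sg g (w y) * (v (ψ k) y - w y))
      atTop (nhds 0) := by
    have hy' : Tendsto (fun k => G (ψ k) y) atTop (nhds 0) := by simpa using hy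
    exact Tendsto.congr (fun k => hG_eq k) hy'
  have := sg_ptwise hg_conv hg_strict hx0 hy0
  rw [hwy]
  exact this
end
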